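/- Variable lookup is correct: if the closure n[e] is closed (the de Bruijn index n is bound by the value environment e), then ⌊n[e]⌋ reduces in zero or more CAU⁻σ steps to e(n), the n-th closure stored in e. -/

import Mathlib

namespace CAU

/-! ## CAU⁻ syntax (de Bruijn, pure: no explicit operators) -/

/-- Trails of CAU⁻. -/
inductive NTr : Type
  | r : NTr
  | t : NTr → NTr → NTr
  | pb : NTr                      -- β
  | pbb : NTr                     -- β!
  | ti : NTr
  | lam : NTr → NTr
  | ap : NTr → NTr → NTr
  | lets : NTr → NTr → NTr
  | tb : (Fin 9 → NTr) → NTr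
  deriving Inhabited

/-- Terms of CAU⁻ (de Bruijn indices). -/
inductive NTm : Type
  | var : ℕ → NTm
  | lam : NTm → NTm
  | ap : NTm → NTm → NTm
  | lets : NTm → NTm → NTm
  | bang : NTr → NTm → NTm
  | ann : NTr → NTm → NTm         -- q ▷ M
  | insp : (Fin 9 → NTm) → NTm    -- ι(ϑ)
  deriving Inhabited

/-- Permutation (τ) reduction on CAU⁻ trails, closed under arbitrary contexts. -/
inductive TStepQ : NTr → NTr → Prop
  | tReflR (q) : TStepQ (.t q .r) q
  | tReflL (q) : TStepQ (.t .r q) q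
  | tbRefl : TStepQ (.tb fun _ => .r) .r
  | apRefl : TStepQ (.ap .r .r) .r
  | lamRefl : TStepQ (.lam .r) .r
  | letsRefl : TStepQ (.lets .r .r) .r
  | tAssoc (q₁ q₂ q₃) : TStepQ (.t (.t q₁ q₂) q₃) (.t q₁ (.t q₂ q₃))
  | tLam (q q') : TStepQ (.t (.lam q) (.lam q')) (.lam (.t q q'))
  | tLamT (q₁ q₁' q) :
      TStepQ (.t (.lam q₁) (.t (.lam q₁') q)) (.t (.lam (.t q₁ q₁')) q)
  | tAp (q₁ q₂ q₁' q₂') :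
      TStepQ (.t (.ap q₁ q₂) (.ap q₁' q₂')) (.ap (.t q₁ q₁') (.t q₂ q₂'))
  | tApT (q₁ q₂ q₁' q₂' q) :
      TStepQ (.t (.ap q₁ q₂) (.t (.ap q₁' q₂') q)) (.t (.ap (.t q₁ q₁') (.t q₂ q₂')) q)
  | tLets (q₁ q₂ q₁' q₂') :
      TStepQ (.t (.lets q₁ q₂) (.lets q₁' q₂')) (.lets (.t q₁ q₁') (.t q₂ q₂'))
  | tLetsT (q₁ q₂ q₁' q₂' q) :
      TStepQ (.t (.lets q₁ q₂) (.t (.lets q₁' q₂') q)) (.t (.lets (.t q₁ q₁') (.t q₂ q₂')) q)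
  | tTb (ζ₁ ζ₂) : TStepQ (.t (.tb ζ₁) (.tb ζ₂)) (.tb fun i => .t (ζ₁ i) (ζ₂ i))
  | tTbT (ζ₁ ζ₂ q) :
      TStepQ (.t (.tb ζ₁) (.t (.tb ζ₂) q)) (.t (.tb fun i => .t (ζ₁ i) (ζ₂ i)) q)
  | tL {q q''} (q') : TStepQ q q'' → TStepQ (.t q q') (.t q'' q')
  | tR {q' q''} (q) : TStepQ q' q'' → TStepQ (.t q q') (.t q q'')
  | lamC {q q'} : TStepQ q q' → TStepQ (.lam q) (.lam q')
  | apL {q q''} (q') : TStepQ q q'' → TStepQ (.ap q q') (.ap q'' q')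
  | apR {q' q''} (q) : TStepQ q' q'' → TStepQ (.ap q q') (.ap q q'')
  | letsL {q q''} (q') : TStepQ q q'' → TStepQ (.lets q q') (.lets q'' q')
  | letsR {q' q''} (q) : TStepQ q' q'' → TStepQ (.lets q q') (.lets q q'')
  | tbC {ζ} (i : Fin 9) {q'} : TStepQ (ζ i) q' →
      TStepQ (.tb ζ) (.tb (Function.update ζ i q'))

/-- Permutation (τ) reduction on CAU⁻ terms, closed under arbitrary contexts. -/
inductive TStepN : NTm → NTm → Prop
  | annRefl (M) : TStepN (.ann .r M) M
  | annAnn (q q' M) : TStepN (.ann q (.ann q' M)) (.ann (.t q q') M)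
  | bangAnn (q q' M) : TStepN (.bang q (.ann q' M)) (.bang (.t q q') M)
  | lamAnn (q M) : TStepN (.lam (.ann q M)) (.ann (.lam q) (.lam M))
  | apAnnL (q M N) : TStepN (.ap (.ann q M) N) (.ann (.ap q .r) (.ap M N))
  | apAnnR (q M N) : TStepN (.ap M (.ann q N)) (.ann (.ap .r q) (.ap M N))
  | letsAnnL (q M N) : TStepN (.lets (.ann q M) N) (.ann (.lets q .r) (.lets M N))
  | letsAnnR (q M N) : TStepN (.lets M (.ann q N)) (.ann (.lets .r q) (.lets M N))
  | inspAnn (ϑ : Fin 9 → NTm) (i : Fin 9) (q M) : ϑ i = .ann q M →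
      TStepN (.insp ϑ)
        (.ann (.tb (Function.update (fun _ => NTr.r) i q)) (.insp (Function.update ϑ i M)))
  | lamC {M M'} : TStepN M M' → TStepN (.lam M) (.lam M')
  | apL {M M'} (N) : TStepN M M' → TStepN (.ap M N) (.ap M' N)
  | apR {N N'} (M) : TStepN N N' → TStepN (.ap M N) (.ap M N')
  | letsL {M M'} (N) : TStepN M M' → TStepN (.lets M N) (.lets M' N)
  | letsR {N N'} (M) : TStepN N N' → TStepN (.lets M N) (.lets M N')
  | bangQ {q q'} (M) : TStepQ q q' → TStepN (.bang q M) (.bang q' M)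
  | bangM {M M'} (q) : TStepN M M' → TStepN (.bang q M) (.bang q M')
  | annQ {q q'} (M) : TStepQ q q' → TStepN (.ann q M) (.ann q' M)
  | annM {M M'} (q) : TStepN M M' → TStepN (.ann q M) (.ann q M')
  | inspC {ϑ} (i : Fin 9) {M'} : TStepN (ϑ i) M' →
      TStepN (.insp ϑ) (.insp (Function.update ϑ i M'))

end CAU

/-! ## CAU⁻σ syntax: explicit substitutions and explicit trail projections -/

namespace CAU

mutual
  /-- Terms of CAU⁻σ. -/
  inductive Tm : Type
    | one : Tm                               -- de Bruijn index 1
    | lam : Tm → Tm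
    | ap : Tm → Tm → Tm
    | lets : Tm → Tm → Tm
    | bang : Tr → Tm → Tm
    | ann : Tr → Tm → Tm                     -- q ▷ M
    | insp : (Fin 9 → Tm) → Tm               -- ι(ϑ)
    | sub : Tm → Sb → Tm                     -- closure M[s]
    | er : Tm → Tm                           -- explicit trail erasure ⌊M⌋
  /-- Trails of CAU⁻σ. -/
  inductive Tr : Type
    | r : Tr
    | t : Tr → Tr → Tr
    | pb : Tr                                -- β
    | pbb : Tr                               -- β!
    | ti : Tr
    | lam : Tr → Tr
    | ap : Tr → Tr → Tr
    | lets : Tr → Tr → Tr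
    | tb : (Fin 9 → Tr) → Tr
    | ext : Tm → Tr                          -- explicit trail extraction ⌈M⌉
  /-- Explicit substitutions of CAU⁻σ. -/
  inductive Sb : Type
    | id : Sb                                -- ⟨⟩
    | sh : Sb                                -- ↑
    | cons : Tm → Sb → Sb                    -- M · s
    | comp : Sb → Sb → Sb                    -- s ∘ t
end

instance : Inhabited Tm := ⟨Tm.one⟩
instance : Inhabited Tr := ⟨Tr.r⟩
instance : Inhabited Sb := ⟨Sb.id⟩

/-- `pow n` is the iterated lift `↑^(n+1)`. -/
def pow : ℕ → Sb
  | 0 => .sh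
  | n + 1 => .comp .sh (pow n)

mutual
  /-- σ∪τ one-step reduction on CAU⁻σ terms (closed under arbitrary contexts). -/
  inductive StepT : Tm → Tm → Prop
    -- σ-rules for explicit substitutions
    | subOneId : StepT (.sub .one .id) .one
    | subOneCons (M s) : StepT (.sub .one (.cons M s)) M
    | subLam (M s) : StepT (.sub (.lam M) s) (.lam (.sub M (.cons .one (.comp s .sh))))
    | subAp (M N s) : StepT (.sub (.ap M N) s) (.ap (.sub M s) (.sub N s))
    | subBang (q M s) : StepT (.sub (.bang q M) s) (.bang q (.sub M s))
    | subLets (M N s) :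
        StepT (.sub (.lets M N) s) (.lets (.sub M s) (.sub N (.cons .one (.comp s .sh))))
    | subAnn (q M s) : StepT (.sub (.ann q M) s) (.ann q (.sub M s))
    | subInsp (ϑ s) : StepT (.sub (.insp ϑ) s) (.insp fun i => .sub (ϑ i) s)
    | subSub (M s t) : StepT (.sub (.sub M s) t) (.sub M (.comp s t))
    -- σ-rules for explicit trail erasure
    | erOne : StepT (.er .one) .one
    | erOneSh (n) : StepT (.er (.sub .one (pow n))) (.sub .one (pow n))
    | erLam (M) : StepT (.er (.lam M)) (.lam (.er M))
    | erAp (M N) : StepT (.er (.ap M N)) (.ap (.er M) (.er N))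
    | erBang (q M) : StepT (.er (.bang q M)) (.bang q M)
    | erLets (M N) : StepT (.er (.lets M N)) (.lets (.er M) (.er N))
    | erAnn (q M) : StepT (.er (.ann q M)) (.er M)
    | erInsp (ϑ) : StepT (.er (.insp ϑ)) (.insp fun i => .er (ϑ i))
    -- τ-rules on terms
    | annRefl (M) : StepT (.ann .r M) M
    | annAnn (q q' M) : StepT (.ann q (.ann q' M)) (.ann (.t q q') M)
    | bangAnn (q q' M) : StepT (.bang q (.ann q' M)) (.bang (.t q q') M)
    | lamAnn (q M) : StepT (.lam (.ann q M)) (.ann (.lam q) (.lam M))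
    | apAnnL (q M N) : StepT (.ap (.ann q M) N) (.ann (.ap q .r) (.ap M N))
    | apAnnR (q M N) : StepT (.ap M (.ann q N)) (.ann (.ap .r q) (.ap M N))
    | letsAnnL (q M N) : StepT (.lets (.ann q M) N) (.ann (.lets q .r) (.lets M N))
    | letsAnnR (q M N) : StepT (.lets M (.ann q N)) (.ann (.lets .r q) (.lets M N))
    | inspAnn (ϑ : Fin 9 → Tm) (i : Fin 9) (q M) : ϑ i = .ann q M →
        StepT (.insp ϑ)
          (.ann (.tb (Function.update (fun _ => Tr.r) i q)) (.insp (Function.update ϑ i M)))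
    -- congruence closure
    | lamC {M M'} : StepT M M' → StepT (.lam M) (.lam M')
    | apL {M M'} (N) : StepT M M' → StepT (.ap M N) (.ap M' N)
    | apR {N N'} (M) : StepT N N' → StepT (.ap M N) (.ap M N')
    | letsL {M M'} (N) : StepT M M' → StepT (.lets M N) (.lets M' N)
    | letsR {N N'} (M) : StepT N N' → StepT (.lets M N) (.lets M N')
    | bangQ {q q'} (M) : StepQ q q' → StepT (.bang q M) (.bang q' M)
    | bangM {M M'} (q) : StepT M M' → StepT (.bang q M) (.bang q M')
    | annQ {q q'} (M) : StepQ q q' → StepT (.ann q M) (.ann q' M)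
    | annM {M M'} (q) : StepT M M' → StepT (.ann q M) (.ann q M')
    | inspC {ϑ} (i : Fin 9) {M'} : StepT (ϑ i) M' →
        StepT (.insp ϑ) (.insp (Function.update ϑ i M'))
    | subM {M M'} (s) : StepT M M' → StepT (.sub M s) (.sub M' s)
    | subS {s s'} (M) : StepS s s' → StepT (.sub M s) (.sub M s')
    | erC {M M'} : StepT M M' → StepT (.er M) (.er M')
  /-- σ∪τ one-step reduction on CAU⁻σ trails. -/
  inductive StepQ : Tr → Tr → Prop
    -- σ-rules for explicit trail extraction
    | extOne : StepQ (.ext .one) .r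
    | extOneSh (n) : StepQ (.ext (.sub .one (pow n))) .r
    | extLam (M) : StepQ (.ext (.lam M)) (.lam (.ext M))
    | extAp (M N) : StepQ (.ext (.ap M N)) (.ap (.ext M) (.ext N))
    | extBang (q M) : StepQ (.ext (.bang q M)) .r
    | extLets (M N) : StepQ (.ext (.lets M N)) (.lets (.ext M) (.ext N))
    | extAnn (q M) : StepQ (.ext (.ann q M)) (.t q (.ext M))
    | extInsp (ϑ) : StepQ (.ext (.insp ϑ)) (.tb fun i => .ext (ϑ i))
    -- τ-rules on trails
    | tReflR (q) : StepQ (.t q .r) q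
    | tReflL (q) : StepQ (.t .r q) q
    | tbRefl : StepQ (.tb fun _ => .r) .r
    | apRefl : StepQ (.ap .r .r) .r
    | lamRefl : StepQ (.lam .r) .r
    | letsRefl : StepQ (.lets .r .r) .r
    | tAssoc (q₁ q₂ q₃) : StepQ (.t (.t q₁ q₂) q₃) (.t q₁ (.t q₂ q₃))
    | tLam (q q') : StepQ (.t (.lam q) (.lam q')) (.lam (.t q q'))
    | tLamT (q₁ q₁' q) :
        StepQ (.t (.lam q₁) (.t (.lam q₁') q)) (.t (.lam (.t q₁ q₁')) q)
    | tAp (q₁ q₂ q₁' q₂') :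
        StepQ (.t (.ap q₁ q₂) (.ap q₁' q₂')) (.ap (.t q₁ q₁') (.t q₂ q₂'))
    | tApT (q₁ q₂ q₁' q₂' q) :
        StepQ (.t (.ap q₁ q₂) (.t (.ap q₁' q₂') q)) (.t (.ap (.t q₁ q₁') (.t q₂ q₂')) q)
    | tLets (q₁ q₂ q₁' q₂') :
        StepQ (.t (.lets q₁ q₂) (.lets q₁' q₂')) (.lets (.t q₁ q₁') (.t q₂ q₂'))
    | tLetsT (q₁ q₂ q₁' q₂' q) :
        StepQ (.t (.lets q₁ q₂) (.t (.lets q₁' q₂') q)) (.t (.lets (.t q₁ q₁') (.t q₂ q₂')) q)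
    | tTb (ζ₁ ζ₂) : StepQ (.t (.tb ζ₁) (.tb ζ₂)) (.tb fun i => .t (ζ₁ i) (ζ₂ i))
    | tTbT (ζ₁ ζ₂ q) :
        StepQ (.t (.tb ζ₁) (.t (.tb ζ₂) q)) (.t (.tb fun i => .t (ζ₁ i) (ζ₂ i)) q)
    -- congruence closure
    | tL {q q''} (q') : StepQ q q'' → StepQ (.t q q') (.t q'' q')
    | tR {q' q''} (q) : StepQ q' q'' → StepQ (.t q q') (.t q q'')
    | lamC {q q'} : StepQ q q' → StepQ (.lam q) (.lam q')
    | apL {q q''} (q') : StepQ q q'' → StepQ (.ap q q') (.ap q'' q')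
    | apR {q' q''} (q) : StepQ q' q'' → StepQ (.ap q q') (.ap q q'')
    | letsL {q q''} (q') : StepQ q q'' → StepQ (.lets q q') (.lets q'' q')
    | letsR {q' q''} (q) : StepQ q' q'' → StepQ (.lets q q') (.lets q q'')
    | tbC {ζ} (i : Fin 9) {q'} : StepQ (ζ i) q' → StepQ (.tb ζ) (.tb (Function.update ζ i q'))
    | extC {M M'} : StepT M M' → StepQ (.ext M) (.ext M')
  /-- σ one-step reduction on CAU⁻σ substitutions. -/
  inductive StepS : Sb → Sb → Prop
    | idComp (s) : StepS (.comp .id s) s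
    | shId : StepS (.comp .sh .id) .sh
    | shCons (M s) : StepS (.comp .sh (.cons M s)) s
    | consComp (M s t) : StepS (.comp (.cons M s) t) (.cons (.sub M t) (.comp s t))
    | compAssoc (s₁ s₂ s₃) : StepS (.comp (.comp s₁ s₂) s₃) (.comp s₁ (.comp s₂ s₃))
    | consM {M M'} (s) : StepT M M' → StepS (.cons M s) (.cons M' s)
    | consS {s s'} (M) : StepS s s' → StepS (.cons M s) (.cons M s')
    | compL {s s''} (t) : StepS s s'' → StepS (.comp s t) (.comp s'' t)
    | compR {t t'} (s) : StepS t t' → StepS (.comp s t) (.comp s t')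
end

/-- στ-normal terms. -/
def NormalT (M : Tm) : Prop := ∀ N, ¬ StepT M N
/-- στ-normal trails. -/
def NormalQ (q : Tr) : Prop := ∀ q', ¬ StepQ q q'
/-- σ-normal substitutions. -/
def NormalS (s : Sb) : Prop := ∀ t, ¬ StepS s t

/-- `nf` is a στ-normal-form function for terms. -/
def IsNFT (nf : Tm → Tm) : Prop :=
  ∀ M, Relation.ReflTransGen StepT M (nf M) ∧ NormalT (nf M)
/-- `nfq` is a στ-normal-form function for trails. -/
def IsNFQ (nfq : Tr → Tr) : Prop :=
  ∀ q, Relation.ReflTransGen StepQ q (nfq q) ∧ NormalQ (nfq q)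
/-- `nfs` is a σ-normal-form function for substitutions. -/
def IsNFS (nfs : Sb → Sb) : Prop :=
  ∀ s, Relation.ReflTransGen StepS s (nfs s) ∧ NormalS (nfs s)

end CAU
namespace CAU

/-! ## Grammar of στ-normal forms -/

mutual
  /-- Grammar of στ-normal CAU⁻σ terms. -/
  inductive GTm : Tm → Prop
    | one : GTm .one
    | oneSh (n) : GTm (.sub .one (pow n))
    | lam {M} : GTm M → GTm (.lam M)
    | ap {M N} : GTm M → GTm N → GTm (.ap M N)
    | lets {M N} : GTm M → GTm N → GTm (.lets M N)
    | bang {q M} : GTr q → GTm M → GTm (.bang q M)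
    | ann {q M} : GTr q → GTm M → GTm (.ann q M)
    | insp {ϑ} : (∀ i, GTm (ϑ i)) → GTm (.insp ϑ)
  /-- Grammar of στ-normal CAU⁻σ trails. -/
  inductive GTr : Tr → Prop
    | r : GTr .r
    | t {q q'} : GTr q → GTr q' → GTr (.t q q')
    | pb : GTr .pb
    | pbb : GTr .pbb
    | ti : GTr .ti
    | lam {q} : GTr q → GTr (.lam q)
    | ap {q q'} : GTr q → GTr q' → GTr (.ap q q')
    | lets {q q'} : GTr q → GTr q' → GTr (.lets q q')
    | tb {ζ} : (∀ i, GTr (ζ i)) → GTr (.tb ζ)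
end

/-- Grammar of σ-normal CAU⁻σ substitutions. -/
inductive GSb : Sb → Prop
  | id : GSb .id
  | shn (n) : GSb (pow n)
  | cons {M s} : GTm M → GSb s → GSb (.cons M s)

/-! ## Focused forms and meta-level projections -/

/-- Meta-level trail erasure ⌊M⌋*, relative to a normal form function. -/
def metaErase (nf : Tm → Tm) (M : Tm) : Tm :=
  match nf M with
  | .ann _ M' => M'
  | N => N

/-- Meta-level trail extraction ⌈M⌉*, relative to a normal form function. -/
def metaExt (nf : Tm → Tm) (M : Tm) : Tr :=
  match nf M with
  | .ann q _ => q
  | _ => .r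

/-- The focused form ⟨M⟩ = ⌈M⌉* ▷ ⌊M⌋*. -/
def focusT (nf : Tm → Tm) (M : Tm) : Tm := .ann (metaExt nf M) (metaErase nf M)

/-- Focusing a σ-normal substitution pointwise. -/
def focusSb (nf : Tm → Tm) : Sb → Sb
  | .cons M s => .cons (focusT nf M) (focusSb nf s)
  | s => s

end CAU
namespace CAU

/-! ## Embedding pure (σ-normal) terms into CAU⁻σ -/

/-- Embedding of pure trails. -/
def toTr : NTr → Tr
  | .r => .r
  | .t q q' => .t (toTr q) (toTr q')
  | .pb => .pb
  | .pbb => .pbb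
  | .ti => .ti
  | .lam q => .lam (toTr q)
  | .ap q q' => .ap (toTr q) (toTr q')
  | .lets q q' => .lets (toTr q) (toTr q')
  | .tb ζ => .tb fun i => toTr (ζ i)

/-- Embedding of pure terms: de Bruijn index `var n` (0-based) becomes `1[↑ⁿ]`. -/
def toTm : NTm → Tm
  | .var 0 => .one
  | .var (n+1) => .sub .one (pow n)
  | .lam M => .lam (toTm M)
  | .ap M N => .ap (toTm M) (toTm N)
  | .lets M N => .lets (toTm M) (toTm N)
  | .bang q M => .bang (toTr q) (toTm M)
  | .ann q M => .ann (toTr q) (toTm M)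
  | .insp ϑ => .insp fun i => toTm (ϑ i)

/-- `shiftP p` is the substitution `↑ᵖ` (with `↑⁰ = ⟨⟩`). -/
def shiftP : ℕ → Sb
  | 0 => .id
  | n + 1 => pow n

/-- The substitution `N₁ · … · N_k · ↑ᵖ`. -/
def mkSub : List Tm → ℕ → Sb
  | [], p => shiftP p
  | M :: l, p => .cons M (mkSub l p)

/-! ## Meta-level substitution on pure terms -/

/-- Lift by one all free indices ≥ d. -/
def liftN (d : ℕ) : NTm → NTm
  | .var n => if n < d then .var n else .var (n + 1)
  | .lam M => .lam (liftN (d+1) M)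
  | .ap M N => .ap (liftN d M) (liftN d N)
  | .lets M N => .lets (liftN d M) (liftN d (N))
  | .bang q M => .bang q (liftN d M)
  | .ann q M => .ann q (liftN d M)
  | .insp ϑ => .insp fun i => liftN d (ϑ i)

/-- Meta-level simultaneous substitution `M{N⃗}ₚ` on pure terms. -/
def msubst : NTm → ℕ → List NTm → NTm
  | .var n, p, l => if h : n < l.length then l.get ⟨n, h⟩ else .var (n - l.length + p)
  | .lam M, p, l => .lam (msubst M (p+1) (.var 0 :: l.map (liftN 0)))
  | .ap M N, p, l => .ap (msubst M p l) (msubst N p l)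
  | .lets M N, p, l => .lets (msubst M p l) (msubst N (p+1) (.var 0 :: l.map (liftN 0)))
  | .bang q M, p, l => .bang q (msubst M p l)
  | .ann q M, p, l => .ann q (msubst M p l)
  | .insp ϑ, p, l => .insp fun i => msubst (ϑ i) p l

/-! ## Trail inspection: structural recursion qϑ over trails -/

/-- Structural recursion `qϑ` over a pure trail, applying the nine inspection branches. -/
def recTrailN : NTr → (Fin 9 → NTm) → NTm
  | .r, ϑ => ϑ 0
  | .t q q', ϑ => .ap (.ap (ϑ 1) (recTrailN q ϑ)) (recTrailN q' ϑ)
  | .pb, ϑ => ϑ 2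
  | .pbb, ϑ => ϑ 3
  | .ti, ϑ => ϑ 4
  | .lam q, ϑ => .ap (ϑ 5) (recTrailN q ϑ)
  | .ap q q', ϑ => .ap (.ap (ϑ 6) (recTrailN q ϑ)) (recTrailN q' ϑ)
  | .lets q q', ϑ => .ap (.ap (ϑ 7) (recTrailN q ϑ)) (recTrailN q' ϑ)
  | .tb ζ, ϑ => (List.ofFn fun i => recTrailN (ζ i) ϑ).foldl .ap (ϑ 8)

/-- Structural recursion `qϑ` over a CAU⁻σ trail (junk value on explicit extractions,
which cannot occur in the στ-normal trails it is applied to). -/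
def recTrailT : Tr → (Fin 9 → Tm) → Tm
  | .r, ϑ => ϑ 0
  | .t q q', ϑ => .ap (.ap (ϑ 1) (recTrailT q ϑ)) (recTrailT q' ϑ)
  | .pb, ϑ => ϑ 2
  | .pbb, ϑ => ϑ 3
  | .ti, ϑ => ϑ 4
  | .lam q, ϑ => .ap (ϑ 5) (recTrailT q ϑ)
  | .ap q q', ϑ => .ap (.ap (ϑ 6) (recTrailT q ϑ)) (recTrailT q' ϑ)
  | .lets q q', ϑ => .ap (.ap (ϑ 7) (recTrailT q ϑ)) (recTrailT q' ϑ)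
  | .tb ζ, ϑ => (List.ofFn fun i => recTrailT (ζ i) ϑ).foldl .ap (ϑ 8)
  | .ext _, ϑ => ϑ 0

/-! ## Meta-level β-reduction on pure (σ-normal) terms -/

/-- One inspection step in a bang-free context of a pure term:
some `ι(ϑ)` not guarded by a bang is replaced by `ti ▷ qϑ`. -/
inductive FInspN (q : NTr) : NTm → NTm → Prop
  | insp (ϑ) : FInspN q (.insp ϑ) (.ann .ti (recTrailN q ϑ))
  | lam {M M'} : FInspN q M M' → FInspN q (.lam M) (.lam M')
  | apL {M M'} (N) : FInspN q M M' → FInspN q (.ap M N) (.ap M' N)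
  | apR {N N'} (M) : FInspN q N N' → FInspN q (.ap M N) (.ap M N')
  | letsL {M M'} (N) : FInspN q M M' → FInspN q (.lets M N) (.lets M' N)
  | letsR {N N'} (M) : FInspN q N N' → FInspN q (.lets M N) (.lets M N')
  | ann {M M'} (q') : FInspN q M M' → FInspN q (.ann q' M) (.ann q' M')
  | inspC {ϑ} (i : Fin 9) {M'} : FInspN q (ϑ i) M' →
      FInspN q (.insp ϑ) (.insp (Function.update ϑ i M'))

/-- Meta-level β-reduction on pure (σ-normal) terms, closed under σ-normal contexts. -/
inductive BetaN : NTm → NTm → Prop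
  | beta (M N) : BetaN (.ap (.lam M) N) (.ann .pb (msubst M 0 [N]))
  | betaBang (q M N) : BetaN (.lets (.bang q M) N) (.ann .pbb (msubst N 0 [.ann q M]))
  | insp {q M M'} : FInspN q M M' → BetaN (.bang q M) (.bang q M')
  | lam {M M'} : BetaN M M' → BetaN (.lam M) (.lam M')
  | apL {M M'} (N) : BetaN M M' → BetaN (.ap M N) (.ap M' N)
  | apR {N N'} (M) : BetaN N N' → BetaN (.ap M N) (.ap M N')
  | letsL {M M'} (N) : BetaN M M' → BetaN (.lets M N) (.lets M' N)
  | letsR {N N'} (M) : BetaN N N' → BetaN (.lets M N) (.lets M N')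
  | bang {M M'} (q) : BetaN M M' → BetaN (.bang q M) (.bang q M')
  | ann {M M'} (q) : BetaN M M' → BetaN (.ann q M) (.ann q M')
  | inspC {ϑ} (i : Fin 9) {M'} : BetaN (ϑ i) M' →
      BetaN (.insp ϑ) (.insp (Function.update ϑ i M'))

/-! ## Lazy Beta-reduction of CAU⁻σ -/

/-- One inspection step in a context whose hole is not inside a bang, a substitution,
or an erasure: some `ι(ϑ)` is replaced by `ti ▷ qϑ`. -/
inductive FInspT (q : Tr) : Tm → Tm → Prop
  | insp (ϑ) : FInspT q (.insp ϑ) (.ann .ti (recTrailT q ϑ))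
  | lam {M M'} : FInspT q M M' → FInspT q (.lam M) (.lam M')
  | apL {M M'} (N) : FInspT q M M' → FInspT q (.ap M N) (.ap M' N)
  | apR {N N'} (M) : FInspT q N N' → FInspT q (.ap M N) (.ap M N')
  | letsL {M M'} (N) : FInspT q M M' → FInspT q (.lets M N) (.lets M' N)
  | letsR {N N'} (M) : FInspT q N N' → FInspT q (.lets M N) (.lets M N')
  | ann {M M'} (q') : FInspT q M M' → FInspT q (.ann q' M) (.ann q' M')
  | inspC {ϑ} (i : Fin 9) {M'} : FInspT q (ϑ i) M' →
      FInspT q (.insp ϑ) (.insp (Function.update ϑ i M'))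

mutual
  /-- The lazy Beta-relation of CAU⁻σ (relative to a normal form function `nfq`
  for trails, used in the trail inspection rule), closed under evaluation contexts
  `E_σ` whose hole does not occur inside an erasure. -/
  inductive LBeta (nfq : Tr → Tr) : Tm → Tm → Prop
    | beta (M N) :
        LBeta nfq (.ap (.lam M) N)
          (.ann (.t (.ap (.lam (.ext M)) (.ext N)) .pb) (.sub (.er M) (.cons (.er N) .id)))
    | betaBang (q M N) :
        LBeta nfq (.lets (.bang q M) N)
          (.ann (.t (.lets .r (.ext N)) .pbb) (.sub (.er N) (.cons (.ann q M) .id)))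
    | insp {q M M'} : FInspT (nfq (.t q (.ext M))) M M' →
        LBeta nfq (.bang q M) (.bang q M')
    | lam {M M'} : LBeta nfq M M' → LBeta nfq (.lam M) (.lam M')
    | apL {M M'} (N) : LBeta nfq M M' → LBeta nfq (.ap M N) (.ap M' N)
    | apR {N N'} (M) : LBeta nfq N N' → LBeta nfq (.ap M N) (.ap M N')
    | letsL {M M'} (N) : LBeta nfq M M' → LBeta nfq (.lets M N) (.lets M' N)
    | letsR {N N'} (M) : LBeta nfq N N' → LBeta nfq (.lets M N) (.lets M N')
    | bang {M M'} (q) : LBeta nfq M M' → LBeta nfq (.bang q M) (.bang q M')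
    | ann {M M'} (q) : LBeta nfq M M' → LBeta nfq (.ann q M) (.ann q M')
    | inspC {ϑ} (i : Fin 9) {M'} : LBeta nfq (ϑ i) M' →
        LBeta nfq (.insp ϑ) (.insp (Function.update ϑ i M'))
    | subM {M M'} (s) : LBeta nfq M M' → LBeta nfq (.sub M s) (.sub M' s)
    | subS {s s'} (M) : LBetaSub nfq s s' → LBeta nfq (.sub M s) (.sub M s')
  /-- Lazy Beta-reduction inside substitutions. -/
  inductive LBetaSub (nfq : Tr → Tr) : Sb → Sb → Prop
    | consM {M M'} (s) : LBeta nfq M M' → LBetaSub nfq (.cons M s) (.cons M' s)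
    | consS {s s'} (M) : LBetaSub nfq s s' → LBetaSub nfq (.cons M s) (.cons M s')
    | compL {s s''} (t) : LBetaSub nfq s s'' → LBetaSub nfq (.comp s t) (.comp s'' t)
    | compR {t t'} (s) : LBetaSub nfq t t' → LBetaSub nfq (.comp s t) (.comp s t')
end

/-- CAU⁻σ reduction: the union of Beta-reduction and στ-equivalence. -/
def SRed (nfq : Tr → Tr) (M N : Tm) : Prop :=
  LBeta nfq M N ∨ Relation.EqvGen StepT M N

/-! ## Naive (eager) CAU⁻ reduction on στ-normal terms -/

/-- A principal contraction in the style of CAU⁻ (using an explicit substitution for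
the redex, to be normalized away immediately afterwards), closed under arbitrary
CAU⁻ contexts. -/
inductive NaiveBeta : Tm → Tm → Prop
  | beta (M N) : NaiveBeta (.ap (.lam M) N) (.ann .pb (.sub M (.cons N .id)))
  | betaBang (q M N) :
      NaiveBeta (.lets (.bang q M) N) (.ann .pbb (.sub N (.cons (.ann q M) .id)))
  | insp {q M M'} : FInspT q M M' → NaiveBeta (.bang q M) (.bang q M')
  | lam {M M'} : NaiveBeta M M' → NaiveBeta (.lam M) (.lam M')
  | apL {M M'} (N) : NaiveBeta M M' → NaiveBeta (.ap M N) (.ap M' N)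
  | apR {N N'} (M) : NaiveBeta N N' → NaiveBeta (.ap M N) (.ap M N')
  | letsL {M M'} (N) : NaiveBeta M M' → NaiveBeta (.lets M N) (.lets M' N)
  | letsR {N N'} (M) : NaiveBeta N N' → NaiveBeta (.lets M N) (.lets M N')
  | bang {M M'} (q) : NaiveBeta M M' → NaiveBeta (.bang q M) (.bang q M')
  | ann {M M'} (q) : NaiveBeta M M' → NaiveBeta (.ann q M) (.ann q M')
  | inspC {ϑ} (i : Fin 9) {M'} : NaiveBeta (ϑ i) M' →
      NaiveBeta (.insp ϑ) (.insp (Function.update ϑ i M'))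

/-- One step of CAU⁻ reduction: a principal contraction followed by normalization. -/
def CRed (nf : Tm → Tm) (M N : Tm) : Prop := ∃ R, NaiveBeta M R ∧ N = nf R

/-! ## The eager β̄-reduction on focused forms -/

/-- β̄-reduction: the relation on focused forms induced by meta-level β on pure terms. -/
def BbarT (nf : Tm → Tm) (A B : Tm) : Prop :=
  ∃ M N : NTm, BetaN M N ∧ A = focusT nf (toTm M) ∧ B = focusT nf (toTm N)

/-- Focusing of a σ-normal substitution `N⃗ · ↑ᵖ` given by a list of pure terms. -/
def focusNSub (nf : Tm → Tm) (l : List NTm) (p : ℕ) : Sb :=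
  mkSub (l.map fun M => focusT nf (toTm M)) p

/-- β̄-reduction on focused substitutions: one component β-reduces. -/
def BbarS (nf : Tm → Tm) (A B : Sb) : Prop :=
  ∃ (l : List NTm) (p : ℕ) (i : ℕ) (h : i < l.length) (N' : NTm),
    BetaN (l.get ⟨i, h⟩) N' ∧ A = focusNSub nf l p ∧ B = focusNSub nf (l.set i N') p

/-- One-hole σ-normal contexts over pure terms. -/
inductive NCtx : Type
  | hole : NCtx
  | lam : NCtx → NCtx
  | apL : NCtx → NTm → NCtx
  | apR : NTm → NCtx → NCtx
  | letsL : NCtx → NTm → NCtx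
  | letsR : NTm → NCtx → NCtx
  | bang : NTr → NCtx → NCtx
  | ann : NTr → NCtx → NCtx
  | insp : (Fin 9 → NTm) → Fin 9 → NCtx → NCtx

/-- Filling the hole of a σ-normal context. -/
def fillN : NCtx → NTm → NTm
  | .hole, X => X
  | .lam C, X => .lam (fillN C X)
  | .apL C N, X => .ap (fillN C X) N
  | .apR M C, X => .ap M (fillN C X)
  | .letsL C N, X => .lets (fillN C X) N
  | .letsR M C, X => .lets M (fillN C X)
  | .bang q C, X => .bang q (fillN C X)
  | .ann q C, X => .ann q (fillN C X)
  | .insp ϑ i C, X => .insp (Function.update ϑ i (fillN C X))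

end CAU
namespace CAU

/-! ## The call-by-value abstract machine -/

mutual
  /-- Machine closures. -/
  inductive Clo : Type
    | lamC : NTm → Env → Clo          -- ⌊(λM̂)[e]⌋
    | bangC : Tr → Clo → Clo          -- !_q C
  /-- Machine values `q ▷ C`. -/
  inductive Val : Type
    | mk : Tr → Clo → Val
  /-- Machine environments: lists of values. -/
  inductive Env : Type
    | nil : Env
    | cons : Val → Env → Env
end

instance : Inhabited Clo := ⟨.lamC (.var 0) .nil⟩
instance : Inhabited Val := ⟨.mk .r default⟩
instance : Inhabited Env := ⟨.nil⟩

/-- The trail of a value. -/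
def Val.tr : Val → Tr | .mk q _ => q
/-- The closure of a value. -/
def Val.clo : Val → Clo | .mk _ C => C

/-- Length of an environment. -/
def envLen : Env → ℕ
  | .nil => 0
  | .cons _ e => envLen e + 1

/-- Environment lookup `e(n)`, returning the n-th closure (0-based). -/
def lookupE : Env → ℕ → Option Clo
  | .cons (.mk _ C) _, 0 => some C
  | .cons _ e, n + 1 => lookupE e n
  | .nil, _ => none

mutual
  /-- The CAU⁻σ term denoted by a closure. -/
  def cloToTm : Clo → Tm
    | .lamC M e => .er (.sub (.lam (toTm M)) (envToSub e))
    | .bangC q C => .bang q (cloToTm C)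
  /-- The CAU⁻σ term denoted by a value. -/
  def valToTm : Val → Tm
    | .mk q C => .ann q (cloToTm C)
  /-- The explicit substitution denoted by an environment. -/
  def envToSub : Env → Sb
    | .nil => .id
    | .cons V e => .cons (valToTm V) (envToSub e)
end

/-- Pure terms closed below depth `d` (all free indices < d). -/
def closedN (d : ℕ) : NTm → Prop
  | .var n => n < d
  | .lam M => closedN (d+1) M
  | .ap M N => closedN d M ∧ closedN d N
  | .lets M N => closedN d M ∧ closedN (d+1) N
  | .bang _ M => closedN d M
  | .ann _ M => closedN d M
  | .insp ϑ => ∀ i, closedN d (ϑ i)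

mutual
  /-- Closed closures. -/
  def closedClo : Clo → Prop
    | .lamC M e => closedN (envLen e + 1) M ∧ closedEnv e
    | .bangC _ C => closedClo C
  /-- Closed values. -/
  def closedVal : Val → Prop
    | .mk _ C => closedClo C
  /-- Closed environments. -/
  def closedEnv : Env → Prop
    | .nil => True
    | .cons V e => closedVal V ∧ closedEnv e
end

/-- Machine codes: pure terms or fragments of abstract syntax tree. -/
inductive Code : Type
  | tm : NTm → Code
  | ap : Code
  | bg : Code
  | lt : NTm → Code
  | ins : Code

/-- Stack tuples `(q | κ | e)`. -/
structure Tup where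
  q : Tr
  κ : Code
  e : Env

instance : Inhabited Tup := ⟨⟨.r, .ap, .nil⟩⟩

/-- Stacks. -/
abbrev Stack := List Tup
/-- Dumps. -/
abbrev Dump := List Val
/-- Machine configurations. -/
abbrev Config := Stack × Dump

/-- The tuple for a pending inspection branch. -/
def brTup (x : Tr × NTm × Env) : Tup := ⟨x.1, .tm x.2.1, x.2.2⟩

mutual
  /-- Well-formed context configurations. -/
  inductive WfCtx : Stack → Dump → Prop
    | nil : WfCtx [] []
    | apTm {π D} (q q' M e) : WfCtx π D →
        WfCtx (⟨q, .tm M, e⟩ :: ⟨q', .ap, .nil⟩ :: π) D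
    | apVal {π D} (q V) : WfCtx π D → WfCtx (⟨q, .ap, .nil⟩ :: π) (V :: D)
    | lt {π D} (q M e) : WfCtx π D → WfCtx (⟨q, .lt M, e⟩ :: π) D
    | bg {π D} (q) : WfCtx π D → WfCtx (⟨q, .bg, .nil⟩ :: π) D
    | ins {π D} (q') (ts : List (Tr × NTm × Env)) (vs : List Val) :
        vs.length + ts.length = 8 → WfCtx π D →
        WfCtx (ts.map brTup ++ ⟨q', .ins, .nil⟩ :: π) (vs ++ D)
  /-- Well-formed term configurations. -/
  inductive WfTm : Stack → Dump → Prop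
    | fin (V) : WfTm [] [V]
    | tm {π D} (q M e) : WfCtx π D → WfTm (⟨q, .tm M, e⟩ :: π) D
    | ap {π D} (q V W) : WfCtx π D → WfTm (⟨q, .ap, .nil⟩ :: π) (W :: V :: D)
    | lt {π D} (q M e V) : WfCtx π D → WfTm (⟨q, .lt M, e⟩ :: π) (V :: D)
    | bg {π D} (q V) : WfCtx π D → WfTm (⟨q, .bg, .nil⟩ :: π) (V :: D)
    | ins {π D} (q) (vs : List Val) : vs.length = 9 → WfCtx π D →
        WfTm (⟨q, .ins, .nil⟩ :: π) (vs ++ D)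
end

/-- The term denoted by a pending-branch tuple. -/
def tupDen (x : Tr × NTm × Env) : Tm := .ann x.1 (.er (.sub (toTm x.2.1) (envToSub x.2.2)))

mutual
  /-- Denotation of context configurations as CAU⁻σ one-hole contexts. -/
  inductive CtxDen : Stack → Dump → (Tm → Tm) → Prop
    | nil : CtxDen [] [] id
    | apTm {π D E} (q q' M e) : CtxDen π D E →
        CtxDen (⟨q, .tm M, e⟩ :: ⟨q', .ap, .nil⟩ :: π) D
          (fun X => E (.ann q' (.ap X (.ann q (.er (.sub (toTm M) (envToSub e)))))))
    | apVal {π D E} (q V) : CtxDen π D E →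
        CtxDen (⟨q, .ap, .nil⟩ :: π) (V :: D) (fun X => E (.ann q (.ap (valToTm V) X)))
    | lt {π D E} (q N e) : CtxDen π D E →
        CtxDen (⟨q, .lt N, e⟩ :: π) D
          (fun X => E (.ann q (.lets X
            (.er (.sub (toTm N) (.cons .one (.comp (envToSub e) .sh)))))))
    | bg {π D E} (q) : CtxDen π D E →
        CtxDen (⟨q, .bg, .nil⟩ :: π) D (fun X => E (.ann q (.bang .r X)))
    | ins {π D E} (q') (ts : List (Tr × NTm × Env)) (vs : List Val) :
        vs.length + ts.length = 8 → CtxDen π D E →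
        CtxDen (ts.map brTup ++ ⟨q', .ins, .nil⟩ :: π) (vs ++ D)
          (fun X => E (.ann q' (.insp fun i =>
            if h : (i : ℕ) < vs.length then valToTm (vs.get ⟨i, h⟩)
            else if (i : ℕ) = vs.length then X
            else tupDen (ts.getD ((i : ℕ) - vs.length - 1) default))))
  /-- Denotation of term configurations as CAU⁻σ terms. -/
  inductive TmDen : Stack → Dump → Tm → Prop
    | fin (V) : TmDen [] [V] (valToTm V)
    | tm {π D E} (q M e) : CtxDen π D E →
        TmDen (⟨q, .tm M, e⟩ :: π) D (E (.ann q (.er (.sub (toTm M) (envToSub e)))))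
    | ap {π D E} (q V W) : CtxDen π D E →
        TmDen (⟨q, .ap, .nil⟩ :: π) (W :: V :: D) (E (.ann q (.ap (valToTm V) (valToTm W))))
    | lt {π D E} (q N e V) : CtxDen π D E →
        TmDen (⟨q, .lt N, e⟩ :: π) (V :: D)
          (E (.ann q (.lets (valToTm V)
            (.er (.sub (toTm N) (.cons .one (.comp (envToSub e) .sh)))))))
    | bg {π D E} (q V) : CtxDen π D E →
        TmDen (⟨q, .bg, .nil⟩ :: π) (V :: D) (E (.ann q (.bang .r (valToTm V))))
    | ins {π D E} (q) (vs : List Val) : vs.length = 9 → CtxDen π D E →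
        TmDen (⟨q, .ins, .nil⟩ :: π) (vs ++ D)
          (E (.ann q (.insp fun i => valToTm (vs.getD (i : ℕ) default))))
end

/-- The trail-collection operator `I(q_ϑ, π, D)` materializing the trail of the
enclosing bang for trail inspection. -/
inductive IRel (nfq : Tr → Tr) : Tr → Stack → Dump → Tr → Prop
  | bg {qθ π D} (q') : IRel nfq qθ (⟨q', .bg, .nil⟩ :: π) D (nfq qθ)
  | apTm {qθ π D res} (q q' M e) :
      IRel nfq (.t q' (.ap qθ q)) π D res →
      IRel nfq qθ (⟨q, .tm M, e⟩ :: ⟨q', .ap, .nil⟩ :: π) D res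
  | apVal {qθ π D res} (q q'' C) :
      IRel nfq (.t q (.ap q'' qθ)) π D res →
      IRel nfq qθ (⟨q, .ap, .nil⟩ :: π) (Val.mk q'' C :: D) res
  | lt {qθ π D res} (q N e) :
      IRel nfq (.t q (.lets qθ .r)) π D res →
      IRel nfq qθ (⟨q, .lt N, e⟩ :: π) D res
  | ins {qθ π D res} (q') (ts : List (Tr × NTm × Env)) (vs : List Val) :
      vs.length + ts.length = 8 →
      IRel nfq (.t q' (.tb fun i =>
          if h : (i : ℕ) < vs.length then (vs.get ⟨i, h⟩).tr
          else if (i : ℕ) = vs.length then qθ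
          else (ts.getD ((i : ℕ) - vs.length - 1) default).1)) π D res →
      IRel nfq qθ (ts.map brTup ++ ⟨q', .ins, .nil⟩ :: π) (vs ++ D) res

/-- The inspection trail of nine evaluated branches, as a term (de Bruijn encoding of
trail constructors as the dangling indices 1..9). -/
def tTT : Tr → NTm
  | .r => .var 0
  | .t q q' => .ap (.ap (.var 1) (tTT q)) (tTT q')
  | .pb => .var 2
  | .pbb => .var 3
  | .ti => .var 4
  | .lam q => .ap (.var 5) (tTT q)
  | .ap q q' => .ap (.ap (.var 6) (tTT q)) (tTT q')
  | .lets q q' => .ap (.ap (.var 7) (tTT q)) (tTT q')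
  | .tb ζ => (List.ofFn fun i => tTT (ζ i)).foldl .ap (.var 8)
  | .ext _ => .var 0

/-- The environment `[r ▷ C₁, …, r ▷ C₉]` of inspection branches. -/
def mkEnv (vs : List Val) : Env := vs.foldr (fun V e => .cons (.mk .r V.clo) e) .nil

/-- Transition relation of the call-by-value abstract machine. -/
inductive MStep (nfq : Tr → Tr) : Config → Config → Prop
  | r1 {π D} (q M N e) :
      MStep nfq (⟨q, .tm (.ap M N), e⟩ :: π, D)
        (⟨.r, .tm M, e⟩ :: ⟨.r, .tm N, e⟩ :: ⟨q, .ap, .nil⟩ :: π, D)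
  | r2 {π D} (q q' C q'' M e) :
      MStep nfq (⟨q, .ap, .nil⟩ :: π, Val.mk q' C :: Val.mk q'' (.lamC M e) :: D)
        (⟨.t q (.t (.ap q'' q') .pb), .tm M, .cons (.mk .r C) e⟩ :: π, D)
  | r3 {π D} (q M e) :
      MStep nfq (⟨q, .tm (.lam M), e⟩ :: π, D) (π, Val.mk q (.lamC M e) :: D)
  | r4 {π D} (q M N e) :
      MStep nfq (⟨q, .tm (.lets M N), e⟩ :: π, D)
        (⟨.r, .tm M, e⟩ :: ⟨q, .lt N, e⟩ :: π, D)
  | r5 {π D} (q N e q' V) :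
      MStep nfq (⟨q, .lt N, e⟩ :: π, Val.mk q' (.bangC V.tr V.clo) :: D)
        (⟨.t q (.t (.lets q' .r) (.t .pbb
            (.ext (.sub (.er (.sub (toTm N) (.cons .one (.comp (envToSub e) .sh))))
              (.cons (valToTm V) .id))))),
          .tm N, .cons V e⟩ :: π, D)
  | r6 {π D} (q q' M e) :
      MStep nfq (⟨q, .tm (.bang q' M), e⟩ :: π, D)
        (⟨.t (toTr q') (.ext (.sub (toTm M) (envToSub e))), .tm M, e⟩ :: ⟨q, .bg, .nil⟩ :: π, D)
  | r7 {π D} (q V) :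
      MStep nfq (⟨q, .bg, .nil⟩ :: π, V :: D) (π, Val.mk q (.bangC V.tr V.clo) :: D)
  | r8 {π D} (q ϑ e) :
      MStep nfq (⟨q, .tm (.insp ϑ), e⟩ :: π, D)
        ((List.ofFn fun i : Fin 9 => Tup.mk .r (.tm (ϑ i)) e) ++ ⟨q, .ins, .nil⟩ :: π, D)
  | r9 {π D} (q) (vs : List Val) (qres : Tr) :
      vs.length = 9 →
      IRel nfq (.t q (.tb fun i => (vs.getD (i : ℕ) default).tr)) π D qres →
      MStep nfq (⟨q, .ins, .nil⟩ :: π, vs ++ D)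
        (⟨.t q (.t (.tb fun i => (vs.getD (i : ℕ) default).tr) .ti),
          .tm (tTT qres), mkEnv vs⟩ :: π, D)
  | r10 {π D} (q n e C) :
      lookupE e n = some C →
      MStep nfq (⟨q, .tm (.var n), e⟩ :: π, D) (π, Val.mk q C :: D)

/-- Closedness conditions on stack tuples. -/
def TupClosed : Tup → Prop
  | ⟨_, .tm M, e⟩ => closedN (envLen e) M ∧ closedEnv e
  | ⟨_, .lt N, e⟩ => closedN (envLen e + 1) N ∧ closedEnv e
  | ⟨_, _, e⟩ => closedEnv e

/-- Valid machine states: well-formed term configurations whose tuples and dump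
values are closed. -/
def Valid (ς : Config) : Prop :=
  WfTm ς.1 ς.2 ∧ (∀ t ∈ ς.1, TupClosed t) ∧ (∀ V ∈ ς.2, closedVal V)

end CAU

namespace CAU

/-! ## Auxiliary development for `lookup_correct` -/

section Infra

variable {α β : Type*}

private lemma eqvGen_lift {R : α → α → Prop} {S : β → β → Prop} (f : α → β)
    (h : ∀ a b, R a b → S (f a) (f b)) {x y} (e : Relation.EqvGen R x y) :
    Relation.EqvGen S (f x) (f y) := by
  induction e with
  | rel a b hab => exact .rel _ _ (h _ _ hab)
  | refl a => exact .refl _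
  | symm a b _ ih => exact .symm _ _ ih
  | trans a b c _ _ ih1 ih2 => exact .trans _ _ _ ih1 ih2

end Infra

/-- στ-equivalence on terms. -/
abbrev ET : Tm → Tm → Prop := Relation.EqvGen StepT
/-- σ-equivalence on substitutions. -/
abbrev ES : Sb → Sb → Prop := Relation.EqvGen StepS

instance : Trans ET ET ET := ⟨fun h1 h2 => .trans _ _ _ h1 h2⟩
instance : Trans ES ES ES := ⟨fun h1 h2 => .trans _ _ _ h1 h2⟩

lemma et1 {a b : Tm} (h : StepT a b) : ET a b := .rel _ _ h
lemma es1 {a b : Sb} (h : StepS a b) : ES a b := .rel _ _ h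
lemma ET.rfl {a : Tm} : ET a a := .refl _
lemma ES.rfl {a : Sb} : ES a a := .refl _
lemma ET.symm' {a b : Tm} (h : ET a b) : ET b a := .symm _ _ h
lemma ES.symm' {a b : Sb} (h : ES a b) : ES b a := .symm _ _ h

/- congruence lemmas -/
lemma etEr {M M'} (h : ET M M') : ET (.er M) (.er M') :=
  eqvGen_lift _ (fun _ _ => .erC) h
lemma etLam {M M'} (h : ET M M') : ET (.lam M) (.lam M') :=
  eqvGen_lift _ (fun _ _ => .lamC) h
lemma etApL (N) {M M'} (h : ET M M') : ET (.ap M N) (.ap M' N) :=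
  eqvGen_lift (fun x => Tm.ap x N) (fun _ _ h => .apL N h) h
lemma etApR (M) {N N'} (h : ET N N') : ET (.ap M N) (.ap M N') :=
  eqvGen_lift (fun x => Tm.ap M x) (fun _ _ h => .apR M h) h
lemma etLetsL (N) {M M'} (h : ET M M') : ET (.lets M N) (.lets M' N) :=
  eqvGen_lift (fun x => Tm.lets x N) (fun _ _ h => .letsL N h) h
lemma etLetsR (M) {N N'} (h : ET N N') : ET (.lets M N) (.lets M N') :=
  eqvGen_lift (fun x => Tm.lets M x) (fun _ _ h => .letsR M h) h
lemma etBang (q) {M M'} (h : ET M M') : ET (.bang q M) (.bang q M') :=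
  eqvGen_lift (fun x => Tm.bang q x) (fun _ _ h => .bangM q h) h
lemma etAnn (q) {M M'} (h : ET M M') : ET (.ann q M) (.ann q M') :=
  eqvGen_lift (fun x => Tm.ann q x) (fun _ _ h => .annM q h) h
lemma etSubM (s) {M M'} (h : ET M M') : ET (.sub M s) (.sub M' s) :=
  eqvGen_lift (fun x => Tm.sub x s) (fun _ _ h => .subM s h) h
lemma etSubS (M) {s s'} (h : ES s s') : ET (.sub M s) (.sub M s') :=
  eqvGen_lift (fun x => Tm.sub M x) (fun _ _ h => .subS M h) h
lemma esConsM (s) {M M'} (h : ET M M') : ES (.cons M s) (.cons M' s) :=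
  eqvGen_lift (fun x => Sb.cons x s) (fun _ _ h => .consM s h) h
lemma esConsS (M) {s s'} (h : ES s s') : ES (.cons M s) (.cons M s') :=
  eqvGen_lift (fun x => Sb.cons M x) (fun _ _ h => .consS M h) h
lemma esCompL (t) {s s'} (h : ES s s') : ES (.comp s t) (.comp s' t) :=
  eqvGen_lift (fun x => Sb.comp x t) (fun _ _ h => .compL t h) h
lemma esCompR (s) {t t'} (h : ES t t') : ES (.comp s t) (.comp s t') :=
  eqvGen_lift (fun x => Sb.comp s x) (fun _ _ h => .compR s h) h

lemma etInspUpd {θ : Fin 9 → Tm} (i : Fin 9) {a b : Tm} (h : ET a b) :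
    ET (.insp (Function.update θ i a)) (.insp (Function.update θ i b)) := by
  refine eqvGen_lift (f := fun x => Tm.insp (Function.update θ i x)) (fun u v hs => ?_) h
  have := StepT.inspC (ϑ := Function.update θ i u) i (M' := v) (by simpa using hs)
  simpa [Function.update_idem] using this

lemma etInsp {θ θ' : Fin 9 → Tm} (h : ∀ i, ET (θ i) (θ' i)) :
    ET (.insp θ) (.insp θ') := by
  have key : ∀ s : Finset (Fin 9),
      ET (.insp θ) (.insp fun i => if i ∈ s then θ' i else θ i) := by
    intro s
    induction s using Finset.induction with
    | empty => simpa using (Relation.EqvGen.refl (Tm.insp θ))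
    | @insert a s ha ih =>
      refine .trans _ _ _ ih ?_
      have h1 : (Tm.insp fun i => if i ∈ s then θ' i else θ i)
          = .insp (Function.update (fun i => if i ∈ s then θ' i else θ i) a (θ a)) := by
        congr 1
        funext i
        rcases eq_or_ne i a with rfl | hi
        · simp [ha]
        · simp [Function.update_of_ne hi]
      have h2 : (Tm.insp fun i => if i ∈ insert a s then θ' i else θ i)
          = .insp (Function.update (fun i => if i ∈ s then θ' i else θ i) a (θ' a)) := by
        congr 1
        funext i
        rcases eq_or_ne i a with rfl | hi
        · simp
        · simp [Function.update_of_ne hi, hi]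
      rw [h1, h2]
      exact etInspUpd a (h a)
  simpa using key Finset.univ

/-! ### Substitution helpers -/

/-- Lift a substitution under one binder. -/
def liftSb (s : Sb) : Sb := .cons .one (.comp s .sh)

/-- Iterated lifting. -/
def liftK : ℕ → Sb → Sb
  | 0, s => s
  | k + 1, s => liftSb (liftK k s)

/-- The substitution denoted by an environment composed with a shift `↑ʲ`. -/
def ejs : ℕ → Env → Sb
  | 0, e => envToSub e
  | j + 1, e => .comp (envToSub e) (shiftP (j + 1))

/-- The substitution `liftᵏ (envToSub e ∘ ↑ʲ)`. -/
def SSb (k j : ℕ) (e : Env) : Sb := liftK k (ejs j e)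

/-- Shift a term by `j`, as an explicit closure. -/
def shS : ℕ → Tm → Tm
  | 0, X => X
  | j + 1, X => .sub X (shiftP (j + 1))

/-- Environment lookup returning the whole value. -/
def lookupV : Env → ℕ → Option Val
  | .cons V _, 0 => some V
  | .cons _ e, n + 1 => lookupV e n
  | .nil, _ => none

lemma lookupE_eq_lookupV : ∀ (n : ℕ) (e : Env), lookupE e n = (lookupV e n).map Val.clo := by
  intro n
  induction n with
  | zero =>
    intro e
    cases e with
    | nil => rfl
    | cons V e => cases V with | mk q C => rfl
  | succ n ih =>
    intro e
    cases e with
    | nil => rfl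
    | cons V e => cases V with | mk q C => simpa [lookupE, lookupV] using ih e

lemma lookupV_none_len : ∀ (n : ℕ) (e : Env), lookupV e n = none → envLen e ≤ n := by
  intro n
  induction n with
  | zero =>
    intro e h
    cases e with
    | nil => simp [envLen]
    | cons V e => simp [lookupV] at h
  | succ n ih =>
    intro e h
    cases e with
    | nil => simp [envLen]
    | cons V e =>
      have := ih e (by simpa [lookupV] using h)
      simp [envLen]; omega

/-! ### Sizes and weights -/

/-- Size of a pure term. -/
def sizeN : NTm → ℕ
  | .var _ => 1
  | .lam M => sizeN M + 1
  | .ap M N => sizeN M + sizeN N + 1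
  | .lets M N => sizeN M + sizeN N + 1
  | .bang _ M => sizeN M + 1
  | .ann _ M => sizeN M + 1
  | .insp θ => (Finset.univ.sum fun i => sizeN (θ i)) + 1

lemma sizeN_insp_le (θ : Fin 9 → NTm) (i : Fin 9) :
    sizeN (θ i) ≤ Finset.univ.sum fun i => sizeN (θ i) :=
  Finset.single_le_sum (f := fun i => sizeN (θ i)) (fun _ _ => Nat.zero_le _)
    (Finset.mem_univ i)

mutual
  /-- Weight of a closure. -/
  def cloW : Clo → ℕ
    | .lamC M e => sizeN M + envW e + 1
    | .bangC _ C => cloW C + 1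
  /-- Weight of a value. -/
  def valW : Val → ℕ
    | .mk _ C => cloW C
  /-- Weight of an environment. -/
  def envW : Env → ℕ
    | .nil => 0
    | .cons V e => valW V + envW e
end

lemma lookupV_weight : ∀ (n : ℕ) (e : Env) (V : Val), lookupV e n = some V →
    valW V ≤ envW e := by
  intro n
  induction n with
  | zero =>
    intro e V h
    cases e with
    | nil => simp [lookupV] at h
    | cons W e =>
      simp [lookupV] at h
      subst h
      simp only [envW]
      omega
  | succ n ih =>
    intro e V h
    cases e with
    | nil => simp [lookupV] at h
    | cons W e =>
      have := ih e V (by simpa [lookupV] using h)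
      simp [envW]; omega

/-! ### Readback -/

mutual
  /-- Readback: the erased στ-meaning of `M[liftᵏ(e ∘ ↑ʲ)]`. -/
  def rbT : NTm → ℕ → ℕ → Env → Tm
    | .var n, k, j, e =>
      if n < k then toTm (.var n)
      else match h : lookupV e (n - k) with
        | some V => rbC (k + j) V.clo
        | none => toTm (.var (n - k - envLen e + (k + j)))
    | .lam M, k, j, e => .lam (rbT M (k+1) j e)
    | .ap M N, k, j, e => .ap (rbT M k j e) (rbT N k j e)
    | .lets M N, k, j, e => .lets (rbT M k j e) (rbT N (k+1) j e)
    | .bang q M, k, j, e => .bang (toTr q) (.sub (toTm M) (SSb k j e))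
    | .ann _ M, k, j, e => rbT M k j e
    | .insp θ, k, j, e => .insp fun i => rbT (θ i) k j e
  termination_by M _ _ e => sizeN M + envW e
  decreasing_by
  · cases V with
    | mk q C =>
      have hw := lookupV_weight _ _ _ h
      simp only [valW, Val.clo] at hw ⊢
      simp [sizeN]
      omega
  all_goals simp [sizeN]
  all_goals first
    | omega
    | (have := sizeN_insp_le θ i; omega)

  /-- Readback of a closure under an outer shift `j`. -/
  def rbC : ℕ → Clo → Tm
    | j, .lamC M e => .lam (rbT M 1 j e)
    | j, .bangC q C => .bang q (shS j (cloToTm C))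
  termination_by j C => cloW C
  decreasing_by simp [cloW]
end

/-! ### σ-calculus computation lemmas -/

lemma s_pow_sh : ∀ a, ES (.comp (pow a) .sh) (pow (a+1)) := by
  intro a
  induction a with
  | zero => exact ES.rfl
  | succ a ih => exact .trans _ _ _ (es1 (.compAssoc _ _ _)) (esCompR _ ih)

lemma s_shiftP_sh : ∀ p, ES (.comp (shiftP p) .sh) (shiftP (p+1)) := by
  intro p
  cases p with
  | zero => exact es1 (.idComp _)
  | succ p => exact s_pow_sh p

lemma s_pow_id : ∀ a, ES (.comp (pow a) .id) (pow a) := by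
  intro a
  induction a with
  | zero => exact es1 .shId
  | succ a ih =>
    exact .trans _ _ _ (es1 (.compAssoc _ _ _)) (esCompR _ ih)

lemma s_shiftP_id : ∀ p, ES (.comp (shiftP p) .id) (shiftP p) := by
  intro p
  cases p with
  | zero => exact es1 (.idComp _)
  | succ p => exact s_pow_id p

lemma s_pow_pow : ∀ a b, ES (.comp (pow a) (pow b)) (pow (a+b+1)) := by
  intro a
  induction a with
  | zero => intro b; rw [Nat.zero_add]; exact ES.rfl
  | succ a ih =>
    intro b
    refine .trans _ _ _ (es1 (.compAssoc _ _ _)) (.trans _ _ _ (esCompR _ (ih b)) ?_)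
    have : a + 1 + b + 1 = (a + b + 1) + 1 := by omega
    rw [this]
    exact ES.rfl

lemma s_shiftP_shiftP : ∀ a b, ES (.comp (shiftP a) (shiftP b)) (shiftP (a+b)) := by
  intro a b
  cases a with
  | zero => rw [Nat.zero_add]; exact es1 (.idComp _)
  | succ a =>
    cases b with
    | zero => simpa [shiftP] using s_pow_id a
    | succ b =>
      have : a + 1 + (b + 1) = (a + b + 1) + 1 := by omega
      rw [this]
      exact s_pow_pow a b

lemma s_swap : ∀ (n : ℕ) (T : Sb),
    ES (.comp (pow n) (liftSb T)) (.comp (shiftP n) (.comp T .sh)) := by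
  intro n
  induction n with
  | zero =>
    intro T
    exact .trans _ _ _ (es1 (.shCons _ _)) (.symm _ _ (es1 (.idComp _)))
  | succ n ih =>
    intro T
    refine .trans _ _ _ (es1 (.compAssoc _ _ _)) (.trans _ _ _ (esCompR _ (ih T)) ?_)
    cases n with
    | zero => exact esCompR _ (es1 (.idComp _))
    | succ m => exact .symm _ _ (es1 (.compAssoc _ _ _))

lemma s_powcons : ∀ (n : ℕ) (t : Sb),
    ES (.comp (pow (n+1)) t) (.comp (pow n) (.comp .sh t)) := by
  intro n
  induction n with
  | zero => intro t; exact es1 (.compAssoc _ _ _)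
  | succ n ih =>
    intro t
    refine .trans _ _ _ (es1 (.compAssoc _ _ _)) (.trans _ _ _ (esCompR _ (ih t)) ?_)
    exact .symm _ _ (es1 (.compAssoc _ _ _))

/-! ### Variable evaluation lemmas -/

lemma t_shift1 : ∀ n, ET (.sub (toTm (.var n)) .sh) (toTm (.var (n+1))) := by
  intro n
  cases n with
  | zero => exact ET.rfl
  | succ n =>
    exact .trans _ _ _ (et1 (.subSub _ _ _)) (etSubS _ (s_pow_sh n))

lemma t_shiftP : ∀ n p, 1 ≤ p → ET (.sub (toTm (.var n)) (shiftP p)) (toTm (.var (n+p))) := by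
  intro n p hp
  obtain ⟨p, rfl⟩ : ∃ p', p = p' + 1 := ⟨p - 1, by omega⟩
  cases n with
  | zero => rw [Nat.zero_add]; exact ET.rfl
  | succ n =>
    have e1 : n + 1 + (p + 1) = (n + p + 1) + 1 := by omega
    rw [e1]
    refine .trans _ _ _ (et1 (.subSub _ _ _)) (etSubS _ ?_)
    exact s_pow_pow n p

lemma t_subid : ∀ n, ET (.sub (toTm (.var n)) .id) (toTm (.var n)) := by
  intro n
  cases n with
  | zero => exact et1 .subOneId
  | succ n => exact .trans _ _ _ (et1 (.subSub _ _ _)) (etSubS _ (s_pow_id n))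

lemma t_vstep : ∀ (n : ℕ) (T : Sb),
    ET (.sub (toTm (.var (n+1))) (liftSb T)) (.sub (.sub (toTm (.var n)) T) .sh) := by
  intro n T
  cases n with
  | zero =>
    refine .trans _ _ _ (et1 (.subSub _ _ _)) (.trans _ _ _ (etSubS _ (es1 (.shCons _ _))) ?_)
    exact .symm _ _ (et1 (.subSub _ _ _))
  | succ n =>
    refine .trans _ _ _ (et1 (.subSub _ _ _)) (.trans _ _ _ (etSubS _ (s_swap (n+1) T)) ?_)
    refine .symm _ _ ?_
    refine .trans _ _ _ (etSubM _ (et1 (.subSub _ _ _))) (.trans _ _ _ (et1 (.subSub _ _ _)) ?_)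
    exact etSubS _ (es1 (.compAssoc _ _ _))

lemma t_consstep : ∀ (n : ℕ) (A : Tm) (t : Sb),
    ET (.sub (toTm (.var (n+1))) (.cons A t)) (.sub (toTm (.var n)) t) := by
  intro n A t
  cases n with
  | zero =>
    exact .trans _ _ _ (et1 (.subSub _ _ _)) (etSubS _ (es1 (.shCons _ _)))
  | succ n =>
    refine .trans _ _ _ (et1 (.subSub _ _ _)) ?_
    refine .trans _ _ _ (etSubS _ (s_powcons n _)) ?_
    refine .trans _ _ _ (etSubS _ (esCompR _ (es1 (.shCons _ _)))) ?_
    exact .symm _ _ (et1 (.subSub _ _ _))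

lemma shsstep : ∀ (m : ℕ) (X : Tm), ET (.sub (shS m X) .sh) (shS (m+1) X) := by
  intro m X
  cases m with
  | zero => exact ET.rfl
  | succ m => exact .trans _ _ _ (et1 (.subSub _ _ _)) (etSubS _ (s_shiftP_sh (m+1)))

/-! ### Lookup evaluation -/

lemma lookv : ∀ (n a : ℕ) (s : Sb), n < a →
    ET (.sub (toTm (.var n)) (liftK a s)) (toTm (.var n)) := by
  intro n
  induction n with
  | zero =>
    intro a s h
    obtain ⟨a, rfl⟩ : ∃ a', a = a' + 1 := ⟨a - 1, by omega⟩
    exact et1 (.subOneCons _ _)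
  | succ n ih =>
    intro a s h
    obtain ⟨a, rfl⟩ : ∃ a', a = a' + 1 := ⟨a - 1, by omega⟩
    refine .trans _ _ _ (t_vstep n (liftK a s)) ?_
    refine .trans _ _ _ (etSubM _ (ih a s (by omega))) ?_
    exact t_shift1 n

lemma lookw : ∀ (a m p : ℕ), a ≤ m → 1 ≤ p →
    ET (.sub (toTm (.var m)) (liftK a (shiftP p))) (toTm (.var (m+p))) := by
  intro a
  induction a with
  | zero => intro m p _ hp; exact t_shiftP m p hp
  | succ a ih =>
    intro m p ha hp
    obtain ⟨m, rfl⟩ : ∃ m', m = m' + 1 := ⟨m - 1, by omega⟩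
    have e1 : m + 1 + p = (m + p) + 1 := by omega
    rw [e1]
    refine .trans _ _ _ (t_vstep m (liftK a (shiftP p))) ?_
    refine .trans _ _ _ (etSubM _ (ih m p (by omega) hp)) ?_
    exact t_shift1 (m + p)

lemma looke : ∀ (n : ℕ) (e : Env) (V : Val) (j : ℕ), lookupV e n = some V →
    ET (.sub (toTm (.var n)) (ejs j e)) (shS j (valToTm V)) := by
  intro n
  induction n with
  | zero =>
    intro e V j h
    cases e with
    | nil => simp [lookupV] at h
    | cons W e =>
      simp [lookupV] at h
      subst h
      cases j with
      | zero => exact et1 (.subOneCons _ _)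
      | succ j =>
        refine .trans _ _ _ (etSubS _ (es1 (.consComp _ _ _))) ?_
        exact et1 (.subOneCons _ _)
  | succ n ih =>
    intro e V j h
    cases e with
    | nil => simp [lookupV] at h
    | cons W e =>
      have h' : lookupV e n = some V := by simpa [lookupV] using h
      cases j with
      | zero =>
        refine .trans _ _ _ (t_consstep n _ _) ?_
        exact ih e V 0 h'
      | succ j =>
        refine .trans _ _ _ (etSubS _ (es1 (.consComp _ _ _))) ?_
        refine .trans _ _ _ (t_consstep n _ _) ?_
        exact ih e V (j+1) h'

lemma looko : ∀ (n : ℕ) (e : Env) (j : ℕ), envLen e ≤ n →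
    ET (.sub (toTm (.var n)) (ejs j e)) (toTm (.var (n - envLen e + j))) := by
  intro n
  induction n with
  | zero =>
    intro e j h
    cases e with
    | cons W e => simp [envLen] at h
    | nil =>
      simp only [envLen, Nat.sub_zero, Nat.zero_add]
      cases j with
      | zero => exact t_subid 0
      | succ j =>
        refine .trans _ _ _ (etSubS _ (es1 (.idComp _))) ?_
        have := t_shiftP 0 (j+1) (by omega)
        rwa [Nat.zero_add] at this
  | succ n ih =>
    intro e j h
    cases e with
    | nil =>
      simp only [envLen, Nat.sub_zero]
      cases j with
      | zero => simpa [ejs, envToSub] using t_subid (n+1)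
      | succ j =>
        refine .trans _ _ _ (etSubS _ (es1 (.idComp _))) ?_
        exact t_shiftP (n+1) (j+1) (by omega)
    | cons W e =>
      have h' : envLen e ≤ n := by simp [envLen] at h; omega
      have e1 : n + 1 - envLen (.cons W e) = n - envLen e := by simp only [envLen]; omega
      rw [e1]
      cases j with
      | zero =>
        refine .trans _ _ _ (t_consstep n _ _) ?_
        exact ih e 0 h'
      | succ j =>
        refine .trans _ _ _ (etSubS _ (es1 (.consComp _ _ _))) ?_
        refine .trans _ _ _ (t_consstep n _ _) ?_
        exact ih e (j+1) h'

lemma lmin : ∀ (k n : ℕ) (e : Env) (V : Val) (j : ℕ), lookupV e (n - k) = some V → k ≤ n →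
    ET (.sub (toTm (.var n)) (SSb k j e)) (shS (k + j) (valToTm V)) := by
  intro k
  induction k with
  | zero =>
    intro n e V j h _
    rw [Nat.zero_add]
    exact looke n e V j (by simpa using h)
  | succ k ih =>
    intro n e V j h hk
    obtain ⟨n, rfl⟩ : ∃ n', n = n' + 1 := ⟨n - 1, by omega⟩
    have e1 : k + 1 + j = (k + j) + 1 := by omega
    rw [e1]
    refine .trans _ _ _ (t_vstep n (SSb k j e)) ?_
    refine .trans _ _ _ (etSubM _ (ih n e V j (by simpa using h) (by omega))) ?_
    exact shsstep (k+j) _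

lemma lmout : ∀ (k n : ℕ) (e : Env) (j : ℕ), lookupV e (n - k) = none → k ≤ n →
    ET (.sub (toTm (.var n)) (SSb k j e)) (toTm (.var (n - k - envLen e + (k + j)))) := by
  intro k
  induction k with
  | zero =>
    intro n e j h _
    simpa [SSb, liftK] using looko n e j (lookupV_none_len _ _ (by simpa using h))
  | succ k ih =>
    intro n e j h hk
    obtain ⟨n, rfl⟩ : ∃ n', n = n' + 1 := ⟨n - 1, by omega⟩
    have hlen := lookupV_none_len _ _ h
    have e1 : n + 1 - (k + 1) - envLen e + (k + 1 + j)
        = (n - k - envLen e + (k + j)) + 1 := by omega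
    rw [e1]
    refine .trans _ _ _ (t_vstep n (SSb k j e)) ?_
    refine .trans _ _ _ (etSubM _ (ih n e j (by simpa using h) (by omega))) ?_
    exact t_shift1 _

/-! ### Composition of the readback substitutions with shifts -/

lemma n1 : ∀ (m a p : ℕ), a ≤ m → 1 ≤ p →
    ES (.comp (shiftP m) (liftK a (shiftP p))) (shiftP (m + p)) := by
  intro m
  induction m with
  | zero =>
    intro a p ha hp
    interval_cases a
    exact s_shiftP_shiftP 0 p
  | succ m ih =>
    intro a p ha hp
    cases a with
    | zero => exact s_shiftP_shiftP (m+1) p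
    | succ a =>
      refine .trans _ _ _ (s_swap m (liftK a (shiftP p))) ?_
      refine .trans _ _ _ (.symm _ _ (es1 (.compAssoc (shiftP m) (liftK a (shiftP p)) .sh))) ?_
      refine .trans _ _ _ (esCompL _ (ih a p (by omega) hp)) ?_
      have e1 : m + 1 + p = (m + p) + 1 := by omega
      rw [e1]
      exact s_shiftP_sh (m + p)

lemma liftcomp {s t u : Sb} (h : ES (.comp s t) u) :
    ES (.comp (liftSb s) (liftSb t)) (liftSb u) := by
  refine .trans _ _ _ (es1 (.consComp _ _ _)) ?_
  refine .trans _ _ _ (esConsM _ (et1 (.subOneCons _ _))) ?_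
  refine esConsS _ ?_
  refine .trans _ _ _ (es1 (.compAssoc _ _ _)) ?_
  refine .trans _ _ _ (esCompR _ (es1 (.shCons _ _))) ?_
  refine .trans _ _ _ (.symm _ _ (es1 (.compAssoc _ _ _))) ?_
  exact esCompL _ h

lemma n2 : ∀ (k : ℕ) (j : ℕ) (e : Env) (a p : ℕ), k ≤ a → a ≤ k + j → 1 ≤ p →
    ES (.comp (SSb k j e) (liftK a (shiftP p))) (SSb k (j + p) e) := by
  intro k
  induction k with
  | zero =>
    intro j e a p _ ha hp
    cases j with
    | zero =>
      interval_cases a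
      rw [Nat.zero_add]
      obtain ⟨p, rfl⟩ : ∃ p', p = p' + 1 := ⟨p - 1, by omega⟩
      exact ES.rfl
    | succ j =>
      have e2 : j + 1 + p = (j + p) + 1 := by omega
      rw [e2]
      refine .trans _ _ _ (es1 (.compAssoc _ _ _)) ?_
      have h1 := n1 (j+1) a p (by omega) hp
      rw [e2] at h1
      exact esCompR _ h1
  | succ k ih =>
    intro j e a p hk ha hp
    obtain ⟨a, rfl⟩ : ∃ a', a = a' + 1 := ⟨a - 1, by omega⟩
    exact liftcomp (ih j e a p (by omega) (by omega) hp)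

/-! ### Readback equations -/

lemma rbT_var_lt {n k : ℕ} (j : ℕ) (e : Env) (h : n < k) :
    rbT (.var n) k j e = toTm (.var n) := by
  rw [rbT]
  simp [h]

lemma rbT_var_some {n k : ℕ} (j : ℕ) {e : Env} {V : Val} (h : ¬ n < k)
    (hl : lookupV e (n - k) = some V) :
    rbT (.var n) k j e = rbC (k + j) V.clo := by
  rw [rbT]
  simp only [h, if_false]
  split
  · rename_i V' hV'
    rw [hl] at hV'
    cases hV'
    rfl
  · rename_i hV'
    rw [hl] at hV'
    cases hV'

lemma rbT_var_none {n k : ℕ} (j : ℕ) {e : Env} (h : ¬ n < k)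
    (hl : lookupV e (n - k) = none) :
    rbT (.var n) k j e = toTm (.var (n - k - envLen e + (k + j))) := by
  rw [rbT]
  simp only [h, if_false]
  split
  · rename_i V' hV'
    rw [hl] at hV'
    cases hV'
  · rfl

lemma rbT_lam (M k j e) : rbT (.lam M) k j e = .lam (rbT M (k+1) j e) := by rw [rbT]
lemma rbT_ap (M N k j e) : rbT (.ap M N) k j e = .ap (rbT M k j e) (rbT N k j e) := by rw [rbT]
lemma rbT_lets (M N k j e) :
    rbT (.lets M N) k j e = .lets (rbT M k j e) (rbT N (k+1) j e) := by rw [rbT]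
lemma rbT_bang (q M k j e) :
    rbT (.bang q M) k j e = .bang (toTr q) (.sub (toTm M) (SSb k j e)) := by rw [rbT]
lemma rbT_ann (q M k j e) : rbT (.ann q M) k j e = rbT M k j e := by rw [rbT]
lemma rbT_insp (θ k j e) : rbT (.insp θ) k j e = .insp fun i => rbT (θ i) k j e := by rw [rbT]
lemma rbC_lam (M e j) : rbC j (.lamC M e) = .lam (rbT M 1 j e) := by rw [rbC]
lemma rbC_bang (q C j) : rbC j (.bangC q C) = .bang q (shS j (cloToTm C)) := by rw [rbC]

/-- Readback terms are stable under erasure. -/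
lemma erased_main : ∀ W : ℕ,
    (∀ M k j e, sizeN M + envW e ≤ W → ET (.er (rbT M k j e)) (rbT M k j e)) ∧
    (∀ j C, cloW C ≤ W → ET (.er (rbC j C)) (rbC j C)) := by
  intro W
  induction W using Nat.strong_induction_on with
  | _ W ih =>
  constructor
  · intro M k j e hW
    cases M with
    | var n =>
      by_cases hk : n < k
      · rw [rbT_var_lt j e hk]
        cases n with
        | zero => exact et1 .erOne
        | succ n => exact et1 (.erOneSh n)
      · cases hl : lookupV e (n - k) with
        | some V =>
          rw [rbT_var_some j hk hl]
          have hwv := lookupV_weight _ _ _ hl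
          have hsz : sizeN (NTm.var n) = 1 := rfl
          have hcw : cloW V.clo ≤ envW e := by cases V with | mk q C => simpa [valW, Val.clo] using hwv
          exact (ih (envW e) (by omega)).2 (k+j) V.clo (by omega)
        | none =>
          rw [rbT_var_none j hk hl]
          cases hn : n - k - envLen e + (k + j) with
          | zero => exact et1 .erOne
          | succ m => exact et1 (.erOneSh m)
    | lam M =>
      rw [rbT_lam]
      refine .trans _ _ _ (et1 (.erLam _)) (etLam ?_)
      have : sizeN M < sizeN (NTm.lam M) := by simp [sizeN]
      exact ((ih (sizeN M + envW e) (by omega)).1 M (k+1) j e (by omega))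
    | ap M N =>
      rw [rbT_ap]
      refine .trans _ _ _ (et1 (.erAp _ _)) ?_
      have hM : sizeN M < sizeN (NTm.ap M N) := by simp [sizeN]
      have hN : sizeN N < sizeN (NTm.ap M N) := by simp [sizeN]
      refine .trans _ _ _ (etApL _ ((ih (sizeN M + envW e) (by omega)).1 M k j e (by omega))) ?_
      exact etApR _ ((ih (sizeN N + envW e) (by omega)).1 N k j e (by omega))
    | lets M N =>
      rw [rbT_lets]
      refine .trans _ _ _ (et1 (.erLets _ _)) ?_
      have hM : sizeN M < sizeN (NTm.lets M N) := by simp [sizeN]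
      have hN : sizeN N < sizeN (NTm.lets M N) := by simp [sizeN]
      refine .trans _ _ _ (etLetsL _ ((ih (sizeN M + envW e) (by omega)).1 M k j e (by omega))) ?_
      exact etLetsR _ ((ih (sizeN N + envW e) (by omega)).1 N (k+1) j e (by omega))
    | bang q M =>
      rw [rbT_bang]
      exact et1 (.erBang _ _)
    | ann q M =>
      rw [rbT_ann]
      have : sizeN M < sizeN (NTm.ann q M) := by simp [sizeN]
      exact (ih (sizeN M + envW e) (by omega)).1 M k j e (by omega)
    | insp θ =>
      rw [rbT_insp]
      refine .trans _ _ _ (et1 (.erInsp _)) (etInsp fun i => ?_)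
      have := sizeN_insp_le θ i
      have hs : sizeN (NTm.insp θ) = (Finset.univ.sum fun i => sizeN (θ i)) + 1 := rfl
      exact (ih (sizeN (θ i) + envW e) (by omega)).1 (θ i) k j e (by omega)
  · intro j C hW
    cases C with
    | lamC M e =>
      rw [rbC_lam]
      refine .trans _ _ _ (et1 (.erLam _)) (etLam ?_)
      have : cloW (Clo.lamC M e) = sizeN M + envW e + 1 := rfl
      exact (ih (sizeN M + envW e) (by omega)).1 M 1 j e (by omega)
    | bangC q C =>
      rw [rbC_bang]
      exact et1 (.erBang _ _)

/-- The main simulation lemma, by strong induction on a combined weight. -/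
lemma main_all : ∀ W : ℕ,
    (∀ M k j e, sizeN M + envW e ≤ W →
       ET (.er (.sub (toTm M) (SSb k j e))) (rbT M k j e)) ∧
    (∀ q C j, cloW C ≤ W →
       ET (.er (shS j (valToTm (.mk q C)))) (rbC j C)) ∧
    (∀ M k j e a p, sizeN M + envW e ≤ W → k ≤ a → a ≤ k + j → 1 ≤ p →
       ET (.sub (rbT M k j e) (liftK a (shiftP p))) (rbT M k (j+p) e)) ∧
    (∀ C m a p, cloW C ≤ W → a ≤ m → 1 ≤ p →
       ET (.sub (rbC m C) (liftK a (shiftP p))) (rbC (m+p) C)) := by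
  intro W
  induction W using Nat.strong_induction_on with
  | _ W ih =>
  refine ⟨?stA, ?stE, ?stS, ?stSC⟩
  case stE =>
    -- erasure of a (possibly shifted) machine value evaluates to closure readback
    intro q C j hW
    have hann : ET (.er (shS j (valToTm (.mk q C)))) (.er (shS j (cloToTm C))) := by
      cases j with
      | zero => exact et1 (.erAnn _ _)
      | succ j =>
        refine .trans _ _ _ (etEr (et1 (.subAnn _ _ _))) ?_
        exact et1 (.erAnn _ _)
    refine .trans _ _ _ hann ?_
    cases C with
    | bangC q' C' =>
      rw [rbC_bang]
      cases j with
      | zero => exact et1 (.erBang _ _)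
      | succ j =>
        refine .trans _ _ _ (etEr (et1 (.subBang _ _ _))) ?_
        exact et1 (.erBang _ _)
    | lamC M e' =>
      rw [rbC_lam]
      have hmes : sizeN M + envW e' < W := by
        have : cloW (Clo.lamC M e') = sizeN M + envW e' + 1 := rfl
        omega
      have hX : ET (cloToTm (.lamC M e')) (.lam (rbT M 1 0 e')) := by
        refine .trans _ _ _ (et1 (.erC (.subLam _ _))) ?_
        refine .trans _ _ _ (et1 (.erLam _)) ?_
        exact etLam ((ih _ hmes).1 M 1 0 e' le_rfl)
      cases j with
      | zero =>
        refine .trans _ _ _ (etEr hX) ?_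
        refine .trans _ _ _ (et1 (.erLam _)) ?_
        exact etLam ((erased_main _).1 M 1 0 e' le_rfl)
      | succ j =>
        refine .trans _ _ _ (etEr (etSubM _ hX)) ?_
        refine .trans _ _ _ (etEr (et1 (.subLam _ _))) ?_
        refine .trans _ _ _ (et1 (.erLam _)) ?_
        refine etLam ?_
        have hsh := (ih _ hmes).2.2.1 M 1 0 e' 1 (j+1) le_rfl le_rfl le_rfl (by omega)
        rw [Nat.zero_add] at hsh
        refine .trans _ _ _ (etEr hsh) ?_
        exact (erased_main _).1 M 1 (j+1) e' le_rfl
  case stS =>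
    intro M k j e a p hW hka haj hp
    cases M with
    | var n =>
      by_cases hk : n < k
      · rw [rbT_var_lt j e hk, rbT_var_lt (j+p) e hk]
        exact lookv n a _ (lt_of_lt_of_le hk hka)
      · cases hl : lookupV e (n - k) with
        | some V =>
          rw [rbT_var_some j hk hl, rbT_var_some (j+p) hk hl]
          have hwv : cloW V.clo ≤ envW e := by
            have := lookupV_weight _ _ _ hl
            cases V with | mk q C => simpa [valW, Val.clo] using this
          have hsz : sizeN (NTm.var n) = 1 := rfl
          have hres := (ih (envW e) (by omega)).2.2.2 V.clo (k+j) a p (by omega) haj hp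
          rwa [Nat.add_assoc] at hres
        | none =>
          rw [rbT_var_none j hk hl, rbT_var_none (j+p) hk hl]
          have hlen := lookupV_none_len _ _ hl
          have e1 : n - k - envLen e + (k + (j + p)) = (n - k - envLen e + (k + j)) + p := by
            omega
          rw [e1]
          exact lookw a _ p (by omega) hp
    | lam M =>
      rw [rbT_lam, rbT_lam]
      have hm : sizeN M < sizeN (NTm.lam M) := by simp [sizeN]
      refine .trans _ _ _ (et1 (.subLam _ _)) (etLam ?_)
      exact (ih (sizeN M + envW e) (by omega)).2.2.1 M (k+1) j e (a+1) p (by omega)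
        (by omega) (by omega) hp
    | ap M N =>
      rw [rbT_ap, rbT_ap]
      have hm : sizeN M < sizeN (NTm.ap M N) := by simp [sizeN]
      have hn : sizeN N < sizeN (NTm.ap M N) := by simp [sizeN]
      refine .trans _ _ _ (et1 (.subAp _ _ _)) ?_
      refine .trans _ _ _ (etApL _ ((ih (sizeN M + envW e) (by omega)).2.2.1 M k j e a p
        (by omega) hka haj hp)) ?_
      exact etApR _ ((ih (sizeN N + envW e) (by omega)).2.2.1 N k j e a p (by omega) hka haj hp)
    | lets M N =>
      rw [rbT_lets, rbT_lets]
      have hm : sizeN M < sizeN (NTm.lets M N) := by simp [sizeN]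
      have hn : sizeN N < sizeN (NTm.lets M N) := by simp [sizeN]
      refine .trans _ _ _ (et1 (.subLets _ _ _)) ?_
      refine .trans _ _ _ (etLetsL _ ((ih (sizeN M + envW e) (by omega)).2.2.1 M k j e a p
        (by omega) hka haj hp)) ?_
      exact etLetsR _ ((ih (sizeN N + envW e) (by omega)).2.2.1 N (k+1) j e (a+1) p
        (by omega) (by omega) (by omega) hp)
    | bang q M =>
      rw [rbT_bang, rbT_bang]
      refine .trans _ _ _ (et1 (.subBang _ _ _)) ?_
      refine .trans _ _ _ (etBang _ (et1 (.subSub _ _ _))) ?_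
      exact etBang _ (etSubS _ (n2 k j e a p hka haj hp))
    | ann q M =>
      rw [rbT_ann, rbT_ann]
      have hm : sizeN M < sizeN (NTm.ann q M) := by simp [sizeN]
      exact (ih (sizeN M + envW e) (by omega)).2.2.1 M k j e a p (by omega) hka haj hp
    | insp θ =>
      rw [rbT_insp, rbT_insp]
      refine .trans _ _ _ (et1 (.subInsp _ _)) (etInsp fun i => ?_)
      have := sizeN_insp_le θ i
      have hs : sizeN (NTm.insp θ) = (Finset.univ.sum fun i => sizeN (θ i)) + 1 := rfl
      exact (ih (sizeN (θ i) + envW e) (by omega)).2.2.1 (θ i) k j e a p (by omega) hka haj hp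
  case stSC =>
    intro C m a p hW ham hp
    cases C with
    | lamC M e' =>
      rw [rbC_lam, rbC_lam]
      have hmes : sizeN M + envW e' < W := by
        have : cloW (Clo.lamC M e') = sizeN M + envW e' + 1 := rfl
        omega
      refine .trans _ _ _ (et1 (.subLam _ _)) (etLam ?_)
      exact (ih _ hmes).2.2.1 M 1 m e' (a+1) p le_rfl (by omega) (by omega) hp
    | bangC q C' =>
      rw [rbC_bang, rbC_bang]
      cases m with
      | zero =>
        interval_cases a
        rw [Nat.zero_add]
        obtain ⟨p, rfl⟩ : ∃ p', p = p' + 1 := ⟨p - 1, by omega⟩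
        exact et1 (.subBang _ _ _)
      | succ m =>
        have e1 : m + 1 + p = (m + p) + 1 := by omega
        rw [e1]
        refine .trans _ _ _ (et1 (.subBang _ _ _)) ?_
        refine .trans _ _ _ (etBang _ (et1 (.subSub _ _ _))) ?_
        have h1 := n1 (m+1) a p ham hp
        rw [e1] at h1
        exact etBang _ (etSubS _ h1)
  case stA =>
    intro M k j e hW
    cases M with
    | var n =>
      by_cases hk : n < k
      · rw [rbT_var_lt j e hk]
        refine .trans _ _ _ (etEr (lookv n k (ejs j e) hk)) ?_
        cases n with
        | zero => exact et1 .erOne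
        | succ n => exact et1 (.erOneSh n)
      · cases hl : lookupV e (n - k) with
        | some V =>
          obtain ⟨q, C⟩ := V
          rw [rbT_var_some j hk hl]
          refine .trans _ _ _ (etEr (lmin k n e ⟨q, C⟩ j hl (by omega))) ?_
          have hwv : cloW C ≤ envW e := by
            simpa [valW] using lookupV_weight _ _ _ hl
          have hsz : sizeN (NTm.var n) = 1 := rfl
          exact (ih (envW e) (by omega)).2.1 q C (k+j) (by omega)
        | none =>
          rw [rbT_var_none j hk hl]
          refine .trans _ _ _ (etEr (lmout k n e j hl (by omega))) ?_
          cases hn : n - k - envLen e + (k + j) with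
          | zero => exact et1 .erOne
          | succ m => exact et1 (.erOneSh m)
    | lam M =>
      rw [rbT_lam]
      have hm : sizeN M < sizeN (NTm.lam M) := by simp [sizeN]
      refine .trans _ _ _ (etEr (et1 (.subLam _ _))) ?_
      refine .trans _ _ _ (et1 (.erLam _)) ?_
      exact etLam ((ih (sizeN M + envW e) (by omega)).1 M (k+1) j e (by omega))
    | ap M N =>
      rw [rbT_ap]
      have hm : sizeN M < sizeN (NTm.ap M N) := by simp [sizeN]
      have hn : sizeN N < sizeN (NTm.ap M N) := by simp [sizeN]
      refine .trans _ _ _ (etEr (et1 (.subAp _ _ _))) ?_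
      refine .trans _ _ _ (et1 (.erAp _ _)) ?_
      refine .trans _ _ _ (etApL _ ((ih (sizeN M + envW e) (by omega)).1 M k j e (by omega))) ?_
      exact etApR _ ((ih (sizeN N + envW e) (by omega)).1 N k j e (by omega))
    | lets M N =>
      rw [rbT_lets]
      have hm : sizeN M < sizeN (NTm.lets M N) := by simp [sizeN]
      have hn : sizeN N < sizeN (NTm.lets M N) := by simp [sizeN]
      refine .trans _ _ _ (etEr (et1 (.subLets _ _ _))) ?_
      refine .trans _ _ _ (et1 (.erLets _ _)) ?_
      refine .trans _ _ _ (etLetsL _ ((ih (sizeN M + envW e) (by omega)).1 M k j e (by omega))) ?_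
      exact etLetsR _ ((ih (sizeN N + envW e) (by omega)).1 N (k+1) j e (by omega))
    | bang q M =>
      rw [rbT_bang]
      refine .trans _ _ _ (etEr (et1 (.subBang _ _ _))) ?_
      exact et1 (.erBang _ _)
    | ann q M =>
      rw [rbT_ann]
      have hm : sizeN M < sizeN (NTm.ann q M) := by simp [sizeN]
      refine .trans _ _ _ (etEr (et1 (.subAnn _ _ _))) ?_
      refine .trans _ _ _ (et1 (.erAnn _ _)) ?_
      exact (ih (sizeN M + envW e) (by omega)).1 M k j e (by omega)
    | insp θ =>
      rw [rbT_insp]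
      refine .trans _ _ _ (etEr (et1 (.subInsp _ _))) ?_
      refine .trans _ _ _ (et1 (.erInsp _)) ?_
      refine etInsp fun i => ?_
      have := sizeN_insp_le θ i
      have hs : sizeN (NTm.insp θ) = (Finset.univ.sum fun i => sizeN (θ i)) + 1 := rfl
      exact (ih (sizeN (θ i) + envW e) (by omega)).1 (θ i) k j e (by omega)

/-- The readback of a closure is στ-equivalent to its denotation. -/
lemma cloToTm_rb (C : Clo) : ET (cloToTm C) (rbC 0 C) := by
  cases C with
  | lamC M e' =>
    rw [rbC_lam]
    refine .trans _ _ _ (et1 (.erC (.subLam _ _))) ?_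
    refine .trans _ _ _ (et1 (.erLam _)) ?_
    exact etLam ((main_all (sizeN M + envW e')).1 M 1 0 e' le_rfl)
  | bangC q' C' =>
    rw [rbC_bang]
    exact ET.rfl

/-- Correctness of variable lookup: if the closure `n[e]` is closed (the index `n` is
bound by the environment `e`), then `⌊n[e]⌋` reduces in zero or more CAU⁻σ steps to
the n-th closure stored in `e`. -/
theorem lookup_correct (nfq : Tr → Tr) (hq : IsNFQ nfq) :
    ∀ (e : Env) (n : ℕ) (C : Clo), lookupE e n = some C →
      Relation.ReflTransGen (SRed nfq)
        (.er (.sub (toTm (.var n)) (envToSub e))) (cloToTm C) := by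
  intro e n C hC
  obtain ⟨q, hV⟩ : ∃ q, lookupV e n = some (.mk q C) := by
    have h := lookupE_eq_lookupV n e
    rw [hC] at h
    cases hv : lookupV e n with
    | none => rw [hv] at h; simp at h
    | some V =>
      obtain ⟨q, C'⟩ := V
      rw [hv] at h
      simp only [Option.map_some, Val.clo, Option.some.injEq] at h
      subst h
      exact ⟨q, rfl⟩
  have hA := (main_all (sizeN (.var n) + envW e)).1 (.var n) 0 0 e le_rfl
  rw [rbT_var_some 0 (by omega) (by simpa using hV)] at hA
  have hfin : ET (.er (.sub (toTm (.var n)) (envToSub e))) (cloToTm C) :=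
    .trans _ _ _ hA (ET.symm' (cloToTm_rb C))
  exact Relation.ReflTransGen.single (Or.inr hfin)

end CAU
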